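/- arXiv:1010.1648 — 2 statements merged into one kernel-verified Lean document; each statement's English description precedes it below -/
import Mathlib

section
/- Let u > 0 and define G(η) = (1-η)·e^{uη}/√η for η ∈ (0,1]. Then G has a critical point in (0,1) if and only if u ≥ (3+2√2)/2. -/
open Real Set

lemma deriv_G (u η : ℝ) (hη : 0 < η) :
    deriv (fun η : ℝ => (1 - η) * Real.exp (u * η) / Real.sqrt η) η
      = Real.exp (u * η) * (-u * η ^ 2 + (u - 1/2) * η - 1/2) / (η * Real.sqrt η) := by
  have hspos : 0 < Real.sqrt η := Real.sqrt_pos.mpr hη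
  have hs : Real.sqrt η ≠ 0 := hspos.ne'
  have ha : HasDerivAt (fun x : ℝ => 1 - x) (-1) η := by
    simpa using (hasDerivAt_id η).const_sub 1
  have hb : HasDerivAt (fun x : ℝ => Real.exp (u * x)) (u * Real.exp (u * η)) η := by
    have := ((hasDerivAt_id η).const_mul u).exp
    simpa [mul_comm] using this
  have h1 := ha.fun_mul hb
  have h2 : HasDerivAt Real.sqrt (1 / (2 * Real.sqrt η)) η :=
    Real.hasDerivAt_sqrt hη.ne'
  have h := h1.fun_div h2 hs
  rw [h.deriv]
  have hsq : Real.sqrt η ^ 2 = η := Real.sq_sqrt hη.le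
  have h3 : Real.sqrt η ^ 3 = η * Real.sqrt η := by
    rw [pow_succ, hsq, mul_comm]
  field_simp
  ring_nf
  rw [hsq]
  ring

theorem stmt_0 (u : ℝ) (hu : 0 < u) :
    (∃ η ∈ Set.Ioo (0:ℝ) 1,
        deriv (fun η : ℝ => (1 - η) * Real.exp (u * η) / Real.sqrt η) η = 0) ↔
      (3 + 2 * Real.sqrt 2) / 2 ≤ u := by
  have h2 : Real.sqrt 2 ^ 2 = 2 := Real.sq_sqrt (by norm_num)
  have h2n : 0 ≤ Real.sqrt 2 := Real.sqrt_nonneg 2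
  constructor
  · rintro ⟨η, ⟨h0, h1⟩, hd⟩
    rw [deriv_G u η h0] at hd
    have he : (0:ℝ) < Real.exp (u * η) := Real.exp_pos _
    have hden : 0 < η * Real.sqrt η := by positivity
    have hq : -u * η ^ 2 + (u - 1/2) * η - 1/2 = 0 := by
      rcases mul_eq_zero.mp ((div_eq_zero_iff.mp hd).resolve_right hden.ne') with h | h
      · exact absurd h he.ne'
      · exact h
    nlinarith [sq_nonneg ((1 + Real.sqrt 2) * η - 1), mul_pos h0 (sub_pos.mpr h1)]
  · intro hu2
    have hD : 0 ≤ u^2 - 3*u + 1/4 := by nlinarith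
    set r := Real.sqrt (u^2 - 3*u + 1/4) with hr
    have hr2 : r^2 = u^2 - 3*u + 1/4 := Real.sq_sqrt hD
    have hrnn : 0 ≤ r := Real.sqrt_nonneg _
    have hb : (0:ℝ) < u - 1/2 := by nlinarith
    have hrb : r < u - 1/2 := by nlinarith
    refine ⟨(u - 1/2 - r)/(2*u), ⟨div_pos (by linarith) (by linarith), ?_⟩, ?_⟩
    · rw [div_lt_one (by positivity)]; nlinarith
    · have hη0 : 0 < (u - 1/2 - r)/(2*u) := div_pos (by linarith) (by linarith)
      rw [deriv_G u _ hη0]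
      have hq : -u * ((u - 1/2 - r)/(2*u)) ^ 2 + (u - 1/2) * ((u - 1/2 - r)/(2*u)) - 1/2 = 0 := by
        field_simp
        nlinarith [hr2]
      rw [hq, mul_zero, zero_div]
end

section
/- Let u > (3+2√2)/2 and G(η) = (1-η)e^{uη}/√η on (0,1). For every β with 0 < β < G(η_m) or β > G(η_M), the equation G(η) = β has exactly one solution in (0,1). -/
open Real Set

lemma stmt_14_deriv_aux (u ηm ηM : ℝ)
    (hq : ∀ x : ℝ, -u*((x-ηm)*(x-ηM)) = -u*x^2 + (u-1/2)*x - 1/2)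
    (x : ℝ) (hx : 0 < x) :
    HasDerivAt (fun η : ℝ => (1 - η) * Real.exp (u * η) / Real.sqrt η)
      (Real.exp (u*x) / (Real.sqrt x * x) * (-u*((x-ηm)*(x-ηM)))) x := by
  have hs : 0 < Real.sqrt x := Real.sqrt_pos.mpr hx
  have h1 : HasDerivAt (fun y:ℝ => (1-y)*Real.exp (u*y))
      ((-1)*Real.exp (u*x) + (1-x)*(Real.exp (u*x)*(u*1))) x :=
    (((hasDerivAt_id x).const_sub 1).mul (((hasDerivAt_id x).const_mul u).exp))
  have h2 : HasDerivAt Real.sqrt (1/(2*Real.sqrt x)) x := Real.hasDerivAt_sqrt hx.ne'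
  have h3 := h1.div h2 hs.ne'
  refine h3.congr_deriv ?_
  rw [hq x]
  have hxx : Real.sqrt x ^ 2 = x := Real.sq_sqrt hx.le
  field_simp
  linear_combination (1-x) * hxx

set_option maxHeartbeats 1000000 in
theorem stmt_14 (u : ℝ) (hu : (3 + 2 * Real.sqrt 2) / 2 < u)
    (Δ ηm ηM : ℝ)
    (hΔ : Δ = Real.sqrt (u ^ 2 - 3 * u + 1 / 4))
    (hm : ηm = (u - 1 / 2 - Δ) / (2 * u))
    (hM : ηM = (u - 1 / 2 + Δ) / (2 * u))
    (G : ℝ → ℝ) (hG : G = fun η : ℝ => (1 - η) * Real.exp (u * η) / Real.sqrt η)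
    (β : ℝ) (hβ : (0 < β ∧ β < G ηm) ∨ G ηM < β) :
    ∃! η : ℝ, η ∈ Set.Ioo (0:ℝ) 1 ∧ G η = β := by
  have hu0 : 0 < u := by nlinarith [Real.sqrt_nonneg 2]
  have hdisc : 0 < u^2 - 3*u + 1/4 := by
    nlinarith [Real.sq_sqrt (by norm_num : (0:ℝ) ≤ 2), Real.sqrt_nonneg 2]
  have hΔsq : Δ^2 = u^2 - 3*u + 1/4 := by rw [hΔ]; exact Real.sq_sqrt hdisc.le
  have hΔpos : 0 < Δ := by rw [hΔ]; exact Real.sqrt_pos.mpr hdisc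
  have hu2 : 1/2 < u := by nlinarith [Real.sqrt_nonneg 2]
  have hΔlt : Δ < u - 1/2 := by nlinarith
  have hΔlt' : Δ < u + 1/2 := by nlinarith
  have hm_pos : 0 < ηm := by
    rw [hm]; apply div_pos (by linarith) (by linarith)
  have hmM : ηm < ηM := by
    have h2u : (0:ℝ) < 2*u := by linarith
    rw [hm, hM, div_lt_div_iff₀ h2u h2u]
    nlinarith
  have hM1 : ηM < 1 := by
    rw [hM, div_lt_one (by linarith)]; linarith
  have hm1 : ηm < 1 := lt_trans hmM hM1
  have hM0 : 0 < ηM := lt_trans hm_pos hmM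
  -- quadratic factorization
  have hsum : u*(ηm+ηM) = u - 1/2 := by rw [hm, hM]; field_simp; ring
  have hprod : 2*u*(ηm*ηM) = 1 := by rw [hm, hM]; field_simp; linear_combination (-4)*hΔsq
  have hq : ∀ x : ℝ, -u*((x-ηm)*(x-ηM)) = -u*x^2 + (u-1/2)*x - 1/2 := by
    intro x; linear_combination x*hsum - (1/2)*hprod
  -- derivative
  have hderiv : ∀ x : ℝ, 0 < x →
      HasDerivAt G (Real.exp (u*x) / (Real.sqrt x * x) * (-u*((x-ηm)*(x-ηM)))) x := by
    intro x hx
    rw [hG]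
    exact stmt_14_deriv_aux u ηm ηM hq x hx
  have hcont : ContinuousOn G (Ioi 0) := fun x hx =>
    (hderiv x hx).continuousAt.continuousWithinAt
  have hderiv_eq : ∀ x : ℝ, 0 < x →
      deriv G x = Real.exp (u*x) / (Real.sqrt x * x) * (-u*((x-ηm)*(x-ηM))) := fun x hx =>
    (hderiv x hx).deriv
  have hpref : ∀ x : ℝ, 0 < x → 0 < Real.exp (u*x) / (Real.sqrt x * x) := fun x hx =>
    div_pos (Real.exp_pos _) (mul_pos (Real.sqrt_pos.mpr hx) hx)
  -- monotonicity on the three pieces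
  have anti1 : StrictAntiOn G (Ioc 0 ηm) := by
    apply strictAntiOn_of_deriv_neg (convex_Ioc _ _)
      (hcont.mono (fun x hx => hx.1))
    intro x hx
    rw [interior_Ioc] at hx
    rw [hderiv_eq x hx.1]
    apply mul_neg_of_pos_of_neg (hpref x hx.1)
    have h0 : 0 < (x-ηm)*(x-ηM) := mul_pos_of_neg_of_neg (by linarith [hx.2]) (by linarith [hx.2])
    exact mul_neg_of_neg_of_pos (by linarith) h0
  have mono : StrictMonoOn G (Icc ηm ηM) := by
    apply strictMonoOn_of_deriv_pos (convex_Icc _ _)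
      (hcont.mono (fun x hx => lt_of_lt_of_le hm_pos hx.1))
    intro x hx
    rw [interior_Icc] at hx
    rw [hderiv_eq x (lt_trans hm_pos hx.1)]
    apply mul_pos (hpref x (lt_trans hm_pos hx.1))
    have h0 : (x-ηm)*(x-ηM) < 0 := mul_neg_of_pos_of_neg (by linarith [hx.1]) (by linarith [hx.2])
    exact mul_pos_of_neg_of_neg (by linarith) h0
  have anti2 : StrictAntiOn G (Icc ηM 1) := by
    apply strictAntiOn_of_deriv_neg (convex_Icc _ _)
      (hcont.mono (fun x hx => lt_of_lt_of_le hM0 hx.1))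
    intro x hx
    rw [interior_Icc] at hx
    rw [hderiv_eq x (lt_trans hM0 hx.1)]
    apply mul_neg_of_pos_of_neg (hpref x (lt_trans hM0 hx.1))
    have h0 : 0 < (x-ηm)*(x-ηM) := mul_pos (by linarith [hx.1, hmM]) (by linarith [hx.1])
    exact mul_neg_of_neg_of_pos (by linarith) h0
  have G1 : G 1 = 0 := by rw [hG]; norm_num
  have Gm_pos : 0 < G ηm := by
    rw [hG]
    exact div_pos (mul_pos (by linarith) (Real.exp_pos _)) (Real.sqrt_pos.mpr hm_pos)
  have GmM : G ηm < G ηM := mono (left_mem_Icc.mpr hmM.le) (right_mem_Icc.mpr hmM.le) hmM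
  rcases hβ with ⟨hβ0, hβm⟩ | hβM
  · -- case 1 : solution in (ηM, 1)
    have hβM : β < G ηM := lt_trans hβm GmM
    have hsub : Icc ηM 1 ⊆ Ioi 0 := fun x hx => lt_of_lt_of_le hM0 hx.1
    have hivt := intermediate_value_Icc' hM1.le (hcont.mono hsub)
    have hβmem : β ∈ Icc (G 1) (G ηM) := by rw [G1]; exact ⟨hβ0.le, hβM.le⟩
    obtain ⟨c, hc, hGc⟩ := hivt hβmem
    have hc1 : c < 1 := by
      rcases lt_or_eq_of_le hc.2 with h | h
      · exact h
      · exfalso; rw [h, G1] at hGc; linarith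
    refine ⟨c, ⟨⟨lt_of_lt_of_le hM0 hc.1, hc1⟩, hGc⟩, ?_⟩
    rintro y ⟨⟨hy0, hy1⟩, hGy⟩
    have hyM : ηM < y := by
      by_contra h
      push_neg at h
      rcases le_or_gt y ηm with h2 | h2
      · have : G ηm ≤ G y := by
          rcases lt_or_eq_of_le h2 with h3 | h3
          · exact (anti1 ⟨hy0, h2⟩ ⟨hm_pos, le_refl _⟩ h3).le
          · rw [h3]
        linarith [hGy ▸ this]
      · have : G ηm ≤ G y := by
          rcases lt_or_eq_of_le h with h3 | h3
          · exact (mono ⟨le_refl _, hmM.le⟩ ⟨h2.le, h⟩ h2).le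
          · rw [h3] at hGy ⊢; linarith [GmM]
        linarith [hGy ▸ this]
    exact anti2.injOn ⟨hyM.le, hy1.le⟩ ⟨hc.1, hc.2⟩ (by rw [hGy, hGc])
  · -- case 2 : solution in (0, ηm)
    have GM_pos : 0 < G ηM := lt_trans Gm_pos GmM
    have hβ0 : 0 < β := lt_trans GM_pos hβM
    set a : ℝ := min (ηm/2) (1/(4*(β+1)^2)) with ha_def
    have ha_pos : 0 < a := lt_min (by linarith) (by positivity)
    have ha_lt : a < ηm := lt_of_le_of_lt (min_le_left _ _) (by linarith)
    have ha_le : a ≤ 1/(4*(β+1)^2) := min_le_right _ _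
    have ha_quarter : a ≤ 1/4 := by
      have h4 : (4:ℝ) ≤ 4*(β+1)^2 := by nlinarith
      have := one_div_le_one_div_of_le (by norm_num : (0:ℝ) < 4) h4
      linarith
    have hsqrt_le : Real.sqrt a ≤ 1/(2*(β+1)) := by
      have h1 : (1:ℝ)/(4*(β+1)^2) = (1/(2*(β+1)))^2 := by field_simp; ring
      calc Real.sqrt a ≤ Real.sqrt (1/(4*(β+1)^2)) := Real.sqrt_le_sqrt ha_le
        _ = 1/(2*(β+1)) := by rw [h1]; exact Real.sqrt_sq (by positivity)
    have hGa : β < G a := by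
      rw [hG]
      have hs : 0 < Real.sqrt a := Real.sqrt_pos.mpr ha_pos
      rw [lt_div_iff₀ hs]
      have hexp : 1 ≤ Real.exp (u*a) := Real.one_le_exp (by positivity)
      have h1 : β*Real.sqrt a ≤ β*(1/(2*(β+1))) := mul_le_mul_of_nonneg_left hsqrt_le hβ0.le
      have h2 : β*(1/(2*(β+1))) < 1/2 := by
        rw [mul_one_div, div_lt_iff₀ (by linarith)]; linarith
      have h3 : (3/4:ℝ) ≤ (1-a)*Real.exp (u*a) := by nlinarith
      linarith
    have hsub : Icc a ηm ⊆ Ioi 0 := fun x hx => lt_of_lt_of_le ha_pos hx.1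
    have hivt := intermediate_value_Icc' ha_lt.le (hcont.mono hsub)
    have hβmem : β ∈ Icc (G ηm) (G a) := ⟨(lt_trans GmM hβM).le, hGa.le⟩
    obtain ⟨c, hc, hGc⟩ := hivt hβmem
    refine ⟨c, ⟨⟨lt_of_lt_of_le ha_pos hc.1, lt_of_le_of_lt hc.2 hm1⟩, hGc⟩, ?_⟩
    rintro y ⟨⟨hy0, hy1⟩, hGy⟩
    have hym : y ≤ ηm := by
      by_contra h
      push_neg at h
      rcases le_or_gt y ηM with h2 | h2
      · have : G y < G ηM := mono ⟨h.le, h2⟩ (right_mem_Icc.mpr hmM.le) (lt_of_le_of_ne h2 ?_)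
        · linarith [hGy ▸ this]
        · intro he; rw [he] at hGy; linarith
      · have : G y < G ηM := anti2 (left_mem_Icc.mpr hM1.le) ⟨h2.le, hy1.le⟩ h2
        linarith [hGy ▸ this]
    exact anti1.injOn ⟨hy0, hym⟩ ⟨lt_of_lt_of_le ha_pos hc.1, hc.2⟩ (by rw [hGy, hGc])
end
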